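/- Let f : ℂˢ → ℂᵗ (or ℝˢ → ℝᵗ) be twice continuously differentiable in a neighborhood of x̂, and suppose the Jacobian J(x̂) is injective. Then there exist constants C > 0 and a neighborhood U of x̂ such that for all x̃ ∈ U, ‖x̃ − x̂‖ ≤ ‖J(x̂)⁺‖·‖f(x̃) − f(x̂)‖ + C·‖f(x̃) − f(x̂)‖², where J(x̂)⁺ is the Moore–Penrose pseudo-inverse of J(x̂). -/

import Mathlib

open ContinuousLinearMap

/-- The Moore–Penrose pseudo-inverse `J⁺ = (JᴴJ)⁻¹Jᴴ` of an injective linear map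
between finite-dimensional inner product spaces (here `Ring.inverse` returns the
genuine inverse since `JᴴJ` is invertible for injective `J`). -/
noncomputable def pseudoInv {s t : ℕ}
    (J : EuclideanSpace ℝ (Fin s) →L[ℝ] EuclideanSpace ℝ (Fin t)) :
    EuclideanSpace ℝ (Fin t) →L[ℝ] EuclideanSpace ℝ (Fin s) :=
  (Ring.inverse ((adjoint J).comp J)).comp (adjoint J)

lemma pseudoInv_comp_self {s t : ℕ}
    (J : EuclideanSpace ℝ (Fin s) →L[ℝ] EuclideanSpace ℝ (Fin t))
    (hinj : Function.Injective J) (v : EuclideanSpace ℝ (Fin s)) :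
    pseudoInv J (J v) = v := by
  set A := (adjoint J).comp J with hA
  have hA_inj : Function.Injective A := by
    intro u w huw
    have h0 : A (u - w) = 0 := by rw [map_sub, huw, sub_self]
    have h1 : (inner ℝ (J (u - w)) (J (u - w)) : ℝ) = 0 := by
      rw [← ContinuousLinearMap.adjoint_inner_left J (u - w) (J (u - w))]
      have : adjoint J (J (u - w)) = 0 := h0
      rw [this]; simp
    have h2 : J (u - w) = 0 := by rwa [inner_self_eq_zero] at h1
    have h3 : u - w = 0 := hinj (by simpa using h2)
    exact sub_eq_zero.mp h3
  have hA_surj : Function.Surjective A.toLinearMap :=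
    LinearMap.injective_iff_surjective.mp hA_inj
  let e : EuclideanSpace ℝ (Fin s) ≃ₗ[ℝ] EuclideanSpace ℝ (Fin s) :=
    LinearEquiv.ofBijective A.toLinearMap ⟨hA_inj, hA_surj⟩
  let e' := e.toContinuousLinearEquiv
  have hu : IsUnit A := by
    refine ⟨(ContinuousLinearEquiv.unitsEquiv ℝ _).symm e', ?_⟩
    ext x
    rfl
  have hcancel : (Ring.inverse A).comp A = ContinuousLinearMap.id ℝ _ :=
    Ring.inverse_mul_cancel A hu
  have : pseudoInv J (J v) = ((Ring.inverse A).comp A) v := rfl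
  rw [this, hcancel]; rfl


set_option maxHeartbeats 1000000 in
/-- Lemma 6: if `f` is twice continuously differentiable near `x̂`
and its Jacobian `J(x̂)` is injective, then
`‖x̃ - x̂‖ ≤ ‖J(x̂)⁺‖·‖f(x̃) - f(x̂)‖ + C·‖f(x̃) - f(x̂)‖²`
for all `x̃` in some neighborhood of `x̂`. -/
theorem stmt8 {s t : ℕ}
    (f : EuclideanSpace ℝ (Fin s) → EuclideanSpace ℝ (Fin t))
    (xh : EuclideanSpace ℝ (Fin s))
    (U₀ : Set (EuclideanSpace ℝ (Fin s))) (hU₀ : U₀ ∈ nhds xh)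
    (hf : ContDiffOn ℝ 2 f U₀)
    (hinj : Function.Injective (fderiv ℝ f xh)) :
    ∃ C > (0 : ℝ), ∃ U ∈ nhds xh, ∀ x ∈ U,
      ‖x - xh‖ ≤ ‖pseudoInv (fderiv ℝ f xh)‖ * ‖f x - f xh‖ + C * ‖f x - f xh‖ ^ 2 := by
  set J := fderiv ℝ f xh with hJdef
  set P := pseudoInv J with hPdef
  have hPJ : ∀ v, P (J v) = v := pseudoInv_comp_self J hinj
  have hnorm : ∀ v : EuclideanSpace ℝ (Fin s), ‖v‖ ≤ ‖P‖ * ‖J v‖ := by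
    intro v
    calc ‖v‖ = ‖P (J v)‖ := by rw [hPJ]
    _ ≤ ‖P‖ * ‖J v‖ := P.le_opNorm (J v)
  -- differentiability on interior U₀
  have hdiff : ∀ y ∈ interior U₀, DifferentiableAt ℝ f y := by
    intro y hy
    have hy' : U₀ ∈ nhds y :=
      Filter.mem_of_superset (isOpen_interior.mem_nhds hy) interior_subset
    exact (hf.contDiffAt hy').differentiableAt (by norm_num)
  -- Lipschitz bound on the derivative
  have hCA : ContDiffAt ℝ 2 f xh := hf.contDiffAt hU₀
  have hfd : ContDiffAt ℝ 1 (fderiv ℝ f) xh := hCA.fderiv_right (by norm_num)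
  obtain ⟨K, tset, htset, hlip⟩ := hfd.exists_lipschitzOnWith
  have hxh_t : xh ∈ tset := mem_of_mem_nhds htset
  set k : ℝ := (K : ℝ) + 1 with hkdef
  have hk : 0 < k := by positivity
  have hlip' : ∀ y ∈ tset, ‖fderiv ℝ f y - J‖ ≤ k * ‖y - xh‖ := by
    intro y hy
    have := hlip.dist_le_mul y hy xh hxh_t
    rw [dist_eq_norm, dist_eq_norm] at this
    have hK : (K : ℝ) * ‖y - xh‖ ≤ k * ‖y - xh‖ := by
      apply mul_le_mul_of_nonneg_right _ (norm_nonneg _)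
      simp [hkdef]
    exact le_trans this hK
  -- choose radius
  have hmem : interior U₀ ∩ tset ∈ nhds xh :=
    Filter.inter_mem (interior_mem_nhds.mpr hU₀) htset
  obtain ⟨δ₁, hδ₁pos, hδ₁⟩ := Metric.nhds_basis_closedBall.mem_iff.mp hmem
  -- Taylor estimate
  have hTaylor : ∀ x : EuclideanSpace ℝ (Fin s), ‖x - xh‖ ≤ δ₁ →
      ‖f x - f xh - J (x - xh)‖ ≤ k * ‖x - xh‖ ^ 2 := by
    intro x hx
    set r := ‖x - xh‖ with hrdef
    have hr0 : 0 ≤ r := norm_nonneg _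
    have hsub : Metric.closedBall xh r ⊆ interior U₀ ∩ tset :=
      subset_trans (Metric.closedBall_subset_closedBall hx) hδ₁
    have hd : ∀ y ∈ Metric.closedBall xh r, DifferentiableAt ℝ f y :=
      fun y hy => hdiff y (hsub hy).1
    have hbound : ∀ y ∈ Metric.closedBall xh r, ‖fderiv ℝ f y - J‖ ≤ k * r := by
      intro y hy
      refine le_trans (hlip' y (hsub hy).2) ?_
      apply mul_le_mul_of_nonneg_left _ hk.le
      rw [← dist_eq_norm]
      exact Metric.mem_closedBall.mp hy
    have hxmem : x ∈ Metric.closedBall xh r := by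
      rw [Metric.mem_closedBall, dist_eq_norm]
    have hxhmem : xh ∈ Metric.closedBall xh r := Metric.mem_closedBall_self hr0
    have := (convex_closedBall xh r).norm_image_sub_le_of_norm_fderiv_le'
      hd hbound hxhmem hxmem
    calc ‖f x - f xh - J (x - xh)‖ ≤ k * r * ‖x - xh‖ := this
    _ = k * r ^ 2 := by rw [← hrdef]; ring
  -- split on ‖P‖
  rcases eq_or_lt_of_le (norm_nonneg P) with hP0 | hPpos
  · refine ⟨1, one_pos, Set.univ, Filter.univ_mem, fun x _ => ?_⟩
    have h0 : ‖x - xh‖ ≤ 0 := by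
      have := hnorm (x - xh)
      rw [← hP0] at this
      simpa using this
    have : (0:ℝ) ≤ ‖P‖ * ‖f x - f xh‖ + 1 * ‖f x - f xh‖ ^ 2 := by positivity
    linarith
  -- main case
  set p := ‖P‖ with hpdef
  set δ := min δ₁ (1 / (2 * k * p)) with hδdef
  have hδpos : 0 < δ := lt_min hδ₁pos (by positivity)
  refine ⟨4 * k * p ^ 3 + 1, by positivity, Metric.ball xh δ,
    Metric.ball_mem_nhds xh hδpos, fun x hx => ?_⟩
  set r := ‖x - xh‖ with hrdef
  set m := ‖f x - f xh‖ with hmdef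
  have hr0 : 0 ≤ r := norm_nonneg _
  have hm0 : 0 ≤ m := norm_nonneg _
  have hrδ : r < δ := by rwa [Metric.mem_ball, dist_eq_norm] at hx
  have hT : ‖f x - f xh - J (x - xh)‖ ≤ k * r ^ 2 :=
    hTaylor x (le_of_lt (lt_of_lt_of_le hrδ (min_le_left _ _)))
  have hsmall : k * p * r ≤ 1 / 2 := by
    have : r ≤ 1 / (2 * k * p) := le_of_lt (lt_of_lt_of_le hrδ (min_le_right _ _))
    rw [le_div_iff₀ (by positivity)] at this
    nlinarith
  have hJv : ‖J (x - xh)‖ ≤ m + k * r ^ 2 := by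
    calc ‖J (x - xh)‖ = ‖(f x - f xh) - (f x - f xh - J (x - xh))‖ := by
          rw [sub_sub_cancel]
    _ ≤ ‖f x - f xh‖ + ‖f x - f xh - J (x - xh)‖ := norm_sub_le _ _
    _ ≤ m + k * r ^ 2 := by rw [← hmdef]; linarith
  have ha : r ≤ p * ‖J (x - xh)‖ := hnorm (x - xh)
  have h1 : r ≤ p * m + p * k * r ^ 2 := by nlinarith
  have h2 : p * k * r ^ 2 ≤ r / 2 := by nlinarith
  clear_value r m p k δ
  have h3 : r ≤ 2 * p * m := by linarith
  have h4 : r ^ 2 ≤ (2 * p * m) ^ 2 := pow_le_pow_left₀ hr0 h3 2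
  have h5 : p * k * r ^ 2 ≤ p * k * (2 * p * m) ^ 2 :=
    mul_le_mul_of_nonneg_left h4 (by positivity)
  have h6 : p * k * (2 * p * m) ^ 2 = 4 * k * p ^ 3 * m ^ 2 := by ring
  nlinarith [sq_nonneg m]
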